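/- Let G be a profinite group. If G is an inverse limit of finite C-groups (finite groups in which every subgroup has a permutable complement), then every closed subgroup of G has a closed permutable complement. -/

import Mathlib

open Pointwise

/-- A Zorn-type lemma producing a minimal element. -/
private lemma zorn_min' {α : Type*} [PartialOrder α] (s : Set α)
    (ih : ∀ c ⊆ s, IsChain (· ≤ ·) c → ∀ y ∈ c, ∃ lb ∈ s, ∀ z ∈ c, lb ≤ z)
    (x : α) (hxs : x ∈ s) :
    ∃ m ∈ s, ∀ z ∈ s, z ≤ m → z = m := by
  obtain ⟨m, -, hm⟩ := zorn_le_nonempty₀ (α := αᵒᵈ) s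
    (fun c hc hchain y hy => by
      obtain ⟨lb, hlbs, hlb⟩ := ih c hc (fun a ha b hb hne => (hchain ha hb hne).symm) y hy
      exact ⟨lb, hlbs, fun z hz => hlb z hz⟩) x hxs
  exact ⟨m, hm.1, fun z hz hzm => le_antisymm hzm (hm.2 hz hzm)⟩

/-- Relative complements inside a subgroup of a finite C-group. -/
private lemma relCompl {Q : Type*} [Group Q]
    (hQ : ∀ A : Subgroup Q, ∃ K : Subgroup Q, (A : Set Q) * (K : Set Q) = Set.univ ∧ A ⊓ K = ⊥)
    (R A : Subgroup Q) (hAR : A ≤ R) :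
    ∃ D : Subgroup Q, D ≤ R ∧ (A : Set Q) * (D : Set Q) = (R : Set Q) ∧ A ⊓ D = ⊥ := by
  obtain ⟨K₀, hmul, hint⟩ := hQ A
  refine ⟨R ⊓ K₀, inf_le_left, ?_,
    le_bot_iff.mp ((inf_le_inf_left A inf_le_right).trans hint.le)⟩
  apply Set.Subset.antisymm
  · rintro x ⟨a, ha, k, hk, rfl⟩
    have hk' : k ∈ R ⊓ K₀ := hk
    exact mul_mem (hAR ha) (Subgroup.mem_inf.mp hk').1
  · intro r hr
    have h1 : r ∈ (A : Set Q) * (K₀ : Set Q) := by rw [hmul]; exact Set.mem_univ r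
    obtain ⟨a, ha, k, hk, hak⟩ := h1
    have hkR : k ∈ R := by
      have hk2 : k = a⁻¹ * r := by rw [← hak]; group
      rw [hk2]; exact mul_mem (inv_mem (hAR ha)) hr
    exact ⟨a, ha, k, Subgroup.mem_inf.mpr ⟨hkR, hk⟩, hak⟩

/-- If a profinite group `G` is (topologically isomorphic to) an inverse limit of finite
C-groups, then every closed subgroup of `G` has a closed permutable complement. -/
theorem stmt6 {ι : Type*} [Preorder ι] (F : ι → Type*) [∀ i, Group (F i)]
    [∀ i, Finite (F i)] [∀ i, TopologicalSpace (F i)] [∀ i, DiscreteTopology (F i)]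
    (f : ∀ i j, i ≤ j → (F j →* F i))
    (hCF : ∀ i, ∀ H : Subgroup (F i), ∃ K : Subgroup (F i),
      (H : Set (F i)) * (K : Set (F i)) = Set.univ ∧ H ⊓ K = ⊥)
    (L : Subgroup (∀ i, F i))
    (hL : ∀ x : ∀ i, F i, x ∈ L ↔ ∀ (i j : ι) (h : i ≤ j), f i j h (x j) = x i)
    {G : Type*} [Group G] [TopologicalSpace G] [IsTopologicalGroup G]
    [CompactSpace G] [T2Space G] [TotallyDisconnectedSpace G]
    (e : G ≃* L) (he : Continuous e) (he' : Continuous e.symm) :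
    ∀ H : Subgroup G, IsClosed (H : Set G) → ∃ K : Subgroup G,
      IsClosed (K : Set G) ∧ (H : Set G) * (K : Set G) = Set.univ ∧ H ⊓ K = ⊥ := by
  intro H hH
  -- coordinate maps
  let φ : ∀ i, G →* F i := fun i => (Pi.evalMonoidHom F i).comp (L.subtype.comp e.toMonoidHom)
  have hφc : ∀ i, Continuous (φ i) := fun i =>
    (continuous_apply i).comp (continuous_subtype_val.comp he)
  have hsep : ∀ x : G, x ≠ 1 → ∃ i, φ i x ≠ 1 := by
    intro x hx
    by_contra hcon
    push_neg at hcon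
    refine hx (e.injective ?_)
    rw [map_one]
    apply Subtype.ext
    funext i
    simpa [φ] using hcon i
  -- the poset of pairs (N, K)
  set T : Set (Subgroup G × Subgroup G) :=
    {p | p.1 ≤ p.2 ∧ IsClosed ((p.2 : Subgroup G) : Set G) ∧
      (H : Set G) * ((p.2 : Subgroup G) : Set G) = Set.univ ∧ H ⊓ p.2 = H ⊓ p.1} with hT
  have hTopT : ((⊤ : Subgroup G), (⊤ : Subgroup G)) ∈ T := by
    refine ⟨le_rfl, by simpa [Subgroup.coe_top] using isClosed_univ, ?_, rfl⟩
    rw [Subgroup.coe_top]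
    apply Set.eq_univ_of_forall
    intro g
    exact ⟨1, H.one_mem, g, trivial, one_mul g⟩
  have hchains : ∀ c ⊆ T, IsChain (· ≤ ·) c → ∀ y ∈ c,
      ∃ lb ∈ T, ∀ z ∈ c, lb ≤ z := by
    rintro c hcT hchain y hy
    haveI : Nonempty c := ⟨⟨y, hy⟩⟩
    set N' : Subgroup G := ⨅ p : c, (p : Subgroup G × Subgroup G).1 with hN'
    set K' : Subgroup G := ⨅ p : c, (p : Subgroup G × Subgroup G).2 with hK'
    have hNK' : N' ≤ K' := le_iInf fun p => (iInf_le _ p).trans (hcT p.2).1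
    have hK'cl : IsClosed (K' : Set G) := by
      rw [hK', Subgroup.coe_iInf]
      exact isClosed_iInter fun p => (hcT p.2).2.1
    refine ⟨(N', K'), ⟨hNK', hK'cl, ?_, ?_⟩, ?_⟩
    · -- H * K' = univ, by compactness
      apply Set.eq_univ_of_forall
      intro g
      have hSgc : IsClosed ((fun k => g * k⁻¹) ⁻¹' (H : Set G)) :=
        hH.preimage (continuous_const.mul continuous_inv)
      set Z : c → Set G := fun p =>
        (((p : Subgroup G × Subgroup G).2 : Subgroup G) : Set G) ∩
          ((fun k => g * k⁻¹) ⁻¹' (H : Set G)) with hZ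
      have hZne : ∀ p, (Z p).Nonempty := by
        intro p
        have hg : g ∈ (H : Set G) * (((p : Subgroup G × Subgroup G).2 : Subgroup G) : Set G) := by
          rw [(hcT p.2).2.2.1]; trivial
        obtain ⟨h, hh, k, hk, hhk⟩ := hg
        refine ⟨k, hk, ?_⟩
        have : g * k⁻¹ = h := by rw [← hhk]; group
        simpa [this] using hh
      have hZd : Directed (· ⊇ ·) Z := by
        intro p q
        rcases eq_or_ne (p : Subgroup G × Subgroup G) q with hpq | hpq
        · exact ⟨p, by rw [hZ], by rw [hZ]; simp only [hpq]; exact le_refl _⟩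
        rcases hchain p.2 q.2 hpq with hle | hle
        · exact ⟨p, le_refl _, Set.inter_subset_inter_left _ hle.2⟩
        · exact ⟨q, Set.inter_subset_inter_left _ hle.2, le_refl _⟩
      have hZcl : ∀ p, IsClosed (Z p) := fun p => ((hcT p.2).2.1).inter hSgc
      obtain ⟨k, hk⟩ := IsCompact.nonempty_iInter_of_directed_nonempty_isCompact_isClosed Z hZd
        hZne (fun p => (hZcl p).isCompact) hZcl
      rw [Set.mem_iInter] at hk
      have hkK' : k ∈ K' := Subgroup.mem_iInf.mpr fun p => (hk p).1
      have hkH : g * k⁻¹ ∈ H := (hk (Classical.arbitrary c)).2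
      exact ⟨g * k⁻¹, hkH, k, hkK', by group⟩
    · -- H ⊓ K' = H ⊓ N'
      apply le_antisymm
      · intro x hx
        rw [Subgroup.mem_inf] at hx ⊢
        refine ⟨hx.1, Subgroup.mem_iInf.mpr fun p => ?_⟩
        have hx2 : x ∈ H ⊓ (p : Subgroup G × Subgroup G).2 :=
          Subgroup.mem_inf.mpr ⟨hx.1, Subgroup.mem_iInf.mp hx.2 p⟩
        rw [(hcT p.2).2.2.2] at hx2
        exact (Subgroup.mem_inf.mp hx2).2
      · exact inf_le_inf_left H hNK'
    · -- lower bound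
      intro z hz
      exact ⟨iInf_le (fun p : c => (p : Subgroup G × Subgroup G).1) ⟨z, hz⟩,
        iInf_le (fun p : c => (p : Subgroup G × Subgroup G).2) ⟨z, hz⟩⟩
  obtain ⟨⟨N, K⟩, hmemT, hmin⟩ := zorn_min' T hchains (⊤, ⊤) hTopT
  obtain ⟨hNK, hKcl, hHK, hInv⟩ := hmemT
  have hNbot : N = ⊥ := by
    by_contra hN
    rw [Subgroup.eq_bot_iff_forall] at hN
    push_neg at hN
    obtain ⟨x, hxN, hx1⟩ := hN
    obtain ⟨i, hxi⟩ := hsep x hx1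
    set ψ : G →* F i := φ i with hψ
    set A : Subgroup G := H ⊓ N with hA
    have hAK : A ≤ K := inf_le_right.trans hNK
    obtain ⟨D, hDK, hDmul, hDint⟩ := relCompl (hCF i) (K.map ψ) (A.map ψ) (Subgroup.map_mono hAK)
    set K' : Subgroup G := K ⊓ D.comap ψ with hK'
    set N' : Subgroup G := N ⊓ ψ.ker with hN'
    have hN'K' : N' ≤ K' := by
      refine le_inf (inf_le_left.trans hNK) ?_
      intro n hn
      rw [Subgroup.mem_comap]
      have : ψ n = 1 := (Subgroup.mem_inf.mp hn).2
      rw [this]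
      exact D.one_mem
    have hmem' : (N', K') ∈ T := by
      refine ⟨hN'K', ?_, ?_, ?_⟩
      · rw [hK', Subgroup.coe_inf, Subgroup.coe_comap]
        exact hKcl.inter ((isClosed_discrete (D : Set (F i))).preimage (hφc i))
      · -- H * K' = univ
        apply Set.eq_univ_of_forall
        intro g
        have hg : g ∈ (H : Set G) * (K : Set G) := by rw [hHK]; trivial
        obtain ⟨h, hh, k, hk, rfl⟩ := hg
        have hk2 : ψ k ∈ ((A.map ψ : Subgroup (F i)) : Set (F i)) * (D : Set (F i)) := by
          rw [hDmul]; exact ⟨k, hk, rfl⟩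
        obtain ⟨ab, hab, d, hd, habd⟩ := hk2
        obtain ⟨a, haA, rfl⟩ := hab
        have hd' : ψ (a⁻¹ * k) = d := by
          rw [map_mul, map_inv, ← habd]; group
        refine ⟨h * a, mul_mem hh (Subgroup.mem_inf.mp haA).1, a⁻¹ * k, ?_, by group⟩
        have : a⁻¹ * k ∈ K' := by
          refine Subgroup.mem_inf.mpr ⟨mul_mem (inv_mem (hAK haA)) hk, ?_⟩
          rw [Subgroup.mem_comap, hd']
          exact hd
        exact this
      · -- H ⊓ K' = H ⊓ N'
        apply le_antisymm
        · intro y hy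
          rw [Subgroup.mem_inf] at hy
          obtain ⟨hyH, hyK'⟩ := hy
          rw [hK', Subgroup.mem_inf] at hyK'
          have hyN : y ∈ N := by
            have h2 : y ∈ H ⊓ K := Subgroup.mem_inf.mpr ⟨hyH, hyK'.1⟩
            rw [hInv] at h2
            exact (Subgroup.mem_inf.mp h2).2
          have hyA : y ∈ A := Subgroup.mem_inf.mpr ⟨hyH, hyN⟩
          have h3 : ψ y ∈ A.map ψ ⊓ D :=
            Subgroup.mem_inf.mpr ⟨⟨y, hyA, rfl⟩, Subgroup.mem_comap.mp hyK'.2⟩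
          rw [hDint, Subgroup.mem_bot] at h3
          exact Subgroup.mem_inf.mpr ⟨hyH, Subgroup.mem_inf.mpr ⟨hyN, h3⟩⟩
        · exact inf_le_inf_left H hN'K'
    have heq := hmin (N', K') hmem' ⟨inf_le_left, inf_le_left⟩
    have hNN : N' = N := congrArg Prod.fst heq
    have hxN' : x ∈ N' := hNN ▸ hxN
    exact hxi (Subgroup.mem_inf.mp hxN').2
  exact ⟨K, hKcl, hHK, by rw [hInv, hNbot, inf_bot_eq]⟩
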